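/- Let B_n be a decision diagram all of whose leaf values are 0 or 1, and let B_t, B_f be arbitrary decision diagrams. Let B̂ = Apply(Apply(B_n, B_t, mult), Apply(Apply(leaf 1, B_n, sub), B_f, mult), add), i.e. the diagram [B_n ⊗ B_t] ⊕ [(1 ⊖ B_n) ⊗ B_f]. Then for every assignment σ : L → Bool: eval(B̂, σ) = eval(B_t, σ) if eval(B_n, σ) = 1, and eval(B̂, σ) = eval(B_f, σ) if eval(B_n, σ) = 0. (Correctness of the block-combination step used to compute regression of a value function through a deterministic action.) -/

import Mathlib

/-- A decision diagram over a linearly ordered label type `L`. -/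
inductive DD (L : Type) where
  | leaf (v : ℝ)
  | node (l : L) (t f : DD L)

/-- Evaluation of a decision diagram under an assignment `σ : L → Bool`. -/
noncomputable def DD.eval {L : Type} (σ : L → Bool) : DD L → ℝ
  | .leaf v => v
  | .node l t f => if σ l then t.eval σ else f.eval σ

/-- The Apply procedure combining two decision diagrams with a binary operation. -/
noncomputable def DD.apply {L : Type} [LinearOrder L] (op : ℝ → ℝ → ℝ) :
    DD L → DD L → DD L
  | .leaf a, .leaf b => .leaf (op a b)
  | .node l₁ t₁ f₁, .leaf b =>
      .node l₁ (DD.apply op t₁ (.leaf b)) (DD.apply op f₁ (.leaf b))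
  | .leaf a, .node l₂ t₂ f₂ =>
      .node l₂ (DD.apply op (.leaf a) t₂) (DD.apply op (.leaf a) f₂)
  | .node l₁ t₁ f₁, .node l₂ t₂ f₂ =>
      if l₁ < l₂ then
        .node l₁ (DD.apply op t₁ (.node l₂ t₂ f₂)) (DD.apply op f₁ (.node l₂ t₂ f₂))
      else if l₂ < l₁ then
        .node l₂ (DD.apply op (.node l₁ t₁ f₁) t₂) (DD.apply op (.node l₁ t₁ f₁) f₂)
      else
        .node l₁ (DD.apply op t₁ t₂) (DD.apply op f₁ f₂)
  termination_by B₁ B₂ => sizeOf B₁ + sizeOf B₂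

/-- All leaves of the diagram have value 0 or 1. -/
def DD.binaryLeaves {L : Type} : DD L → Prop
  | .leaf v => v = 0 ∨ v = 1
  | .node _ t f => t.binaryLeaves ∧ f.binaryLeaves


theorem DD.eval_apply {L : Type} [LinearOrder L] (op : ℝ → ℝ → ℝ) (σ : L → Bool) :
    ∀ B₁ B₂ : DD L, (DD.apply op B₁ B₂).eval σ = op (B₁.eval σ) (B₂.eval σ) := by
  intro B₁ B₂
  induction B₁, B₂ using @DD.apply.induct L _
  case case1 a b => simp [DD.apply, DD.eval]
  case case2 l₁ t₁ f₁ b iht ihf =>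
    simp only [DD.apply, DD.eval, iht, ihf]
    by_cases hσ : σ l₁ <;> simp [hσ]
  case case3 a l₂ t₂ f₂ iht ihf =>
    simp only [DD.apply, DD.eval, iht, ihf]
    by_cases hσ : σ l₂ <;> simp [hσ]
  case case4 l₁ t₁ f₁ l₂ t₂ f₂ h iht ihf =>
    simp only [DD.apply, if_pos h, DD.eval, iht, ihf]
    by_cases hσ : σ l₁ <;> simp [hσ, DD.eval]
  case case5 l₁ t₁ f₁ l₂ t₂ f₂ h h' iht ihf =>
    simp only [DD.apply, if_neg h, if_pos h', DD.eval, iht, ihf]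
    by_cases hσ : σ l₂ <;> simp [hσ, DD.eval]
  case case6 l₁ t₁ f₁ l₂ t₂ f₂ h h' iht ihf =>
    have hl : l₁ = l₂ := ((lt_trichotomy l₁ l₂).resolve_left h).resolve_right h'
    subst hl
    simp only [DD.apply, if_neg h, if_neg h', DD.eval, iht, ihf]
    by_cases hσ : σ l₁ <;> simp [hσ]

/-- Correctness of the block-combination step:
`B̂ = [Bₙ ⊗ B_t] ⊕ [(1 ⊖ Bₙ) ⊗ B_f]` selects `B_t` when `Bₙ` evaluates to 1
and `B_f` when `Bₙ` evaluates to 0, for every fixed valuation. -/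
theorem DD.blockCombination_correct {L : Type} [LinearOrder L]
    (Bn Bt Bf : DD L) (hBn : Bn.binaryLeaves)
    (Bhat : DD L)
    (hBhat : Bhat = DD.apply (· + ·) (DD.apply (· * ·) Bn Bt)
        (DD.apply (· * ·) (DD.apply (· - ·) (DD.leaf 1) Bn) Bf))
    (σ : L → Bool) :
    (Bn.eval σ = 1 → Bhat.eval σ = Bt.eval σ) ∧
    (Bn.eval σ = 0 → Bhat.eval σ = Bf.eval σ) := by
  subst hBhat
  simp only [DD.eval_apply]
  constructor <;> intro h <;> simp [h, DD.eval]
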